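/- Let (R, 𝔪) be a two-dimensional regular local ring, Q ∈ GL_2(R) a 2×2 invertible matrix with entries a, b (first column) and c, d (second column), and suppose 𝔪 = (u, v) = (x, y) with [x y] = [u v]·Q. Let B_{x,y} denote the r × (r−1) bidiagonal matrix with y on the diagonal and −x directly below the diagonal, and similarly B_{u,v}. Then: (1) if a column vector (a_{1,j}, …, a_{r,j})^T expresses an element a_j ∈ 𝔪^{r-1} in terms of x^{r-1}, x^{r-2}y, …, y^{r-1}, then the column Sym^{r-1}(Q)·(a_{1,j}, …, a_{r,j})^T expresses a_j in terms of u^{r-1}, u^{r-2}v, …, v^{r-1}; (2) Sym^{r-1}(Q)·B_{x,y} = det(Q)·B_{u,v}·Sym^{r-2}(Q). -/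

import Mathlib

open IsLocalRing

section Defs

variable {R : Type*} [CommRing R]

/-- `R` is a two-dimensional regular local ring: Noetherian local of Krull dimension 2
whose maximal ideal is generated by two elements. -/
def IsTwoDimRegularLocal (R : Type*) [CommRing R] [IsLocalRing R] : Prop :=
  IsNoetherianRing R ∧ ringKrullDim R = 2 ∧
    ∃ x y : R, maximalIdeal R = Ideal.span {x, y}

/-- `z` lies in the integral closure of the ideal `I`, i.e. it satisfies an equation
`z ^ n + c 1 * z ^ (n-1) + ⋯ + c n = 0` with `c i ∈ I ^ i`. -/
def MemIntClosure (I : Ideal R) (z : R) : Prop :=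
  ∃ n : ℕ, 0 < n ∧ ∃ c : ℕ → R, (∀ i ∈ Finset.Icc 1 n, c i ∈ I ^ i) ∧
    z ^ n + ∑ i ∈ Finset.Icc 1 n, c i * z ^ (n - i) = 0

/-- The ideal `I` is integrally closed. -/
def IdealIntClosed (I : Ideal R) : Prop := ∀ z, MemIntClosure I z → z ∈ I

/-- `I` is `𝔪`-primary. -/
def IsMPrimary [IsLocalRing R] (I : Ideal R) : Prop := I.radical = maximalIdeal R

/-- `ord I = n` : `n` is the largest power of the maximal ideal containing `I`. -/
def ordEQ [IsLocalRing R] (I : Ideal R) (n : ℕ) : Prop :=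
  I ≤ maximalIdeal R ^ n ∧ ¬ I ≤ maximalIdeal R ^ (n + 1)

/-- Determinant of the square matrix with columns `w 0, …, w (r-1)`. -/
def colDet {r : ℕ} (w : Fin r → Fin r → R) : R :=
  Matrix.det (Matrix.of fun i j => w j i)

/-- The ideal of maximal minors `I(M)` of a submodule `M ⊆ R^r`:  it is generated by all
determinants of `r × r` matrices whose columns lie in `M`. -/
def maxMinors {r : ℕ} (M : Submodule R (Fin r → R)) : Ideal R :=
  Ideal.span { d | ∃ w : Fin r → Fin r → R, (∀ j, w j ∈ M) ∧ d = colDet w }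

/-- The ideal `I_k(M)` of `k × k` minors of a matrix whose columns generate `M ⊆ R^r`. -/
def minorsIdeal (k : ℕ) {r : ℕ} (M : Submodule R (Fin r → R)) : Ideal R :=
  Ideal.span { d | ∃ (w : Fin k → Fin r → R) (ρ : Fin k → Fin r),
    Function.Injective ρ ∧ (∀ j, w j ∈ M) ∧
    d = Matrix.det (Matrix.of fun i j : Fin k => w j (ρ i)) }

/-- `v ∈ R^r` is integral over the submodule `M ⊆ R^r` : the determinant of every square
matrix with one column `v` and the remaining columns in `M` is integral over `I(M)`. -/
def IntegralOverMod {r : ℕ} (M : Submodule R (Fin r → R)) (v : Fin r → R) : Prop :=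
  ∀ (w : Fin r → Fin r → R) (j₀ : Fin r), w j₀ = v → (∀ j, j ≠ j₀ → w j ∈ M) →
    MemIntClosure (maxMinors M) (colDet w)

/-- The submodule `M ⊆ R^r` is integrally closed. -/
def ModIntClosed {r : ℕ} (M : Submodule R (Fin r → R)) : Prop :=
  ∀ v, IntegralOverMod M v → v ∈ M

/-- The length of an `R`-module, as the Krull dimension of its submodule lattice. -/
noncomputable def modLength (R : Type*) (M : Type*) [CommRing R] [AddCommGroup M]
    [Module R M] : WithBot ℕ∞ :=
  Order.krullDim (Submodule R M)

/-- `M ⊆ R^r` has finite colength; equivalently, `M` is a finitely generated torsion-free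
module of rank `r` with double dual `M** = R^r`. -/
def FinColength {r : ℕ} (M : Submodule R (Fin r → R)) : Prop :=
  IsFiniteLength R ((Fin r → R) ⧸ M)

/-- `M` has a nonzero free direct summand. -/
def HasFreeSummand {r : ℕ} (M : Submodule R (Fin r → R)) : Prop :=
  ∃ N P : Submodule R (Fin r → R), N ⊔ P = M ∧ N ⊓ P = ⊥ ∧ N ≠ ⊥ ∧ Module.Free R ↥N

/-- `M` is a direct sum of two nonzero submodules. -/
def DecomposableSub {r : ℕ} (M : Submodule R (Fin r → R)) : Prop :=
  ∃ N P : Submodule R (Fin r → R), N ⊔ P = M ∧ N ⊓ P = ⊥ ∧ N ≠ ⊥ ∧ P ≠ ⊥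

/-- `M` is nonzero and not a direct sum of two nonzero submodules. -/
def IndecomposableSub {r : ℕ} (M : Submodule R (Fin r → R)) : Prop :=
  M ≠ ⊥ ∧ ¬ DecomposableSub M

/-- `a` is a minimal generating set of the ideal `I`. -/
def MinGens {m : ℕ} (I : Ideal R) (a : Fin m → R) : Prop :=
  Ideal.span (Set.range a) = I ∧ ∀ j : Fin m, Ideal.span (a '' {j}ᶜ) ≠ I

/-- `a = c 0 * x^(r-1) + c 1 * x^(r-2) * y + ⋯ + c (r-1) * y^(r-1)`. -/
def Expresses (r : ℕ) (x y : R) (c : Fin r → R) (a : R) : Prop :=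
  a = ∑ i : Fin r, c i * x ^ (r - 1 - (i : ℕ)) * y ^ (i : ℕ)

/-- The `k`-th Koszul relation column between `x^(r-1), …, y^(r-1)`:
`y` in position `k` and `-x` in position `k+1`. -/
def stdRelCol (r : ℕ) (x y : R) (k : ℕ) : Fin r → R :=
  fun i => if (i : ℕ) = k then y else if (i : ℕ) = k + 1 then -x else 0

/-- The module generated by the coefficient columns `C j` together with the `r - 1`
Koszul relation columns between `x^(r-1), …, y^(r-1)`. -/
def MrSpan (r : ℕ) (x y : R) {m : ℕ} (C : Fin m → Fin r → R) :
    Submodule R (Fin r → R) :=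
  Submodule.span R (Set.range C ∪ { v | ∃ k, k < r - 1 ∧ v = stdRelCol r x y k })

/-- The data `(x, y, a, C)` presents the module `M_r(I)` : `𝔪 = (x,y)`, `a` is a minimal
generating set of `I` and column `C j` expresses `a j` in terms of `x^(r-1), …, y^(r-1)`. -/
def IsMrPresentation [IsLocalRing R] (r : ℕ) (I : Ideal R) {m : ℕ} (x y : R)
    (a : Fin m → R) (C : Fin m → Fin r → R) : Prop :=
  maximalIdeal R = Ideal.span {x, y} ∧ MinGens I a ∧ ∀ j, Expresses r x y (C j) (a j)

/-- `N` is a reduction of `M` : `N ≤ M` and every element of `M` is integral over `N`. -/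
def IsReductionMod {r : ℕ} (N M : Submodule R (Fin r → R)) : Prop :=
  N ≤ M ∧ ∀ v ∈ M, IntegralOverMod N v

/-- `N` is a minimal reduction of `M`. -/
def IsMinimalReductionMod {r : ℕ} (N M : Submodule R (Fin r → R)) : Prop :=
  IsReductionMod N M ∧ ∀ N' ≤ N, IsReductionMod N' M → N' = N

/-- The `j`-th signed maximal minor of an `r × (r+1)` matrix. -/
def signedMinor {r : ℕ} (A : Matrix (Fin r) (Fin (r + 1)) R) (j : Fin (r + 1)) : R :=
  (-1 : R) ^ (j : ℕ) * (A.submatrix id j.succAbove).det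

/-- `M ⊆ R^r` is extremal: integrally closed, without free direct summands, with
`λ(R/I(M)) = λ(R^r/M) + r(r-1)/2`. -/
def IsExtremal {r : ℕ} (M : Submodule R (Fin r → R)) : Prop :=
  FinColength M ∧ ModIntClosed M ∧ ¬ HasFreeSummand M ∧
    modLength R (R ⧸ maxMinors M) =
      modLength R ((Fin r → R) ⧸ M) + ((r * (r - 1) / 2 : ℕ) : WithBot ℕ∞)

/-- `a ∈ J`, `b ∈ K` is a joint reduction of the pair `(J, K)`. -/
def IsJointReduction (J K : Ideal R) (a b : R) : Prop :=
  a ∈ J ∧ b ∈ K ∧ ∃ n : ℕ,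
    (Ideal.span {a} * K + Ideal.span {b} * J) * (J * K) ^ n = (J * K) ^ (n + 1)

/-- `S` is the matrix `Sym^k(Q)` for `Q = [[a, c], [b, d]]` : with `X = aU + bV`,
`Y = cU + dV`, the `j`-th column of `S` records the coefficients of
`X^(k-j) Y^j` in terms of `U^k, U^(k-1)V, …, V^k`. -/
def IsSymOf (k : ℕ) (a b c d : R) (S : Matrix (Fin (k + 1)) (Fin (k + 1)) R) : Prop :=
  ∀ j : Fin (k + 1),
    ((MvPolynomial.C a * MvPolynomial.X 0 + MvPolynomial.C b * MvPolynomial.X 1) ^ (k - (j : ℕ)) *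
        (MvPolynomial.C c * MvPolynomial.X 0 + MvPolynomial.C d * MvPolynomial.X 1) ^ (j : ℕ)
      : MvPolynomial (Fin 2) R)
    = ∑ i : Fin (k + 1), MvPolynomial.C (S i j) *
        MvPolynomial.X 0 ^ (k - (i : ℕ)) * MvPolynomial.X 1 ^ (i : ℕ)

/-- The `r × s` bidiagonal matrix with `y` on the diagonal and `-x` directly below it. -/
def bidiag (r s : ℕ) (x y : R) : Matrix (Fin r) (Fin s) R :=
  Matrix.of fun i j =>
    if (i : ℕ) = (j : ℕ) then y else if (i : ℕ) = (j : ℕ) + 1 then -x else 0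

end Defs

section Aux
open MvPolynomial

variable {R : Type*} [CommRing R]

private lemma monomial_form (a : R) (p q : ℕ) :
    (MvPolynomial.C a * X 0 ^ p * X 1 ^ q : MvPolynomial (Fin 2) R)
      = MvPolynomial.monomial (Finsupp.single (0 : Fin 2) p + Finsupp.single (1 : Fin 2) q) a := by
  rw [MvPolynomial.X_pow_eq_monomial, MvPolynomial.X_pow_eq_monomial, MvPolynomial.C_apply,
    MvPolynomial.monomial_mul, MvPolynomial.monomial_mul]
  simp

private lemma coeff_extract (n : ℕ) (e : Fin (n+1) → R) (i : Fin (n+1)) :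
    MvPolynomial.coeff (Finsupp.single (0 : Fin 2) (n - (i:ℕ)) + Finsupp.single (1 : Fin 2) (i:ℕ))
      (∑ l : Fin (n+1), MvPolynomial.C (e l) * X 0 ^ (n - (l:ℕ)) * X 1 ^ (l:ℕ)) = e i := by
  rw [MvPolynomial.coeff_sum, Finset.sum_eq_single i]
  · rw [monomial_form, MvPolynomial.coeff_monomial, if_pos rfl]
  · intro l _ hl
    rw [monomial_form, MvPolynomial.coeff_monomial, if_neg]
    intro h
    apply hl
    have h1 := DFunLike.congr_fun h (1 : Fin 2)
    simp [Finsupp.single_apply] at h1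
    exact Fin.ext h1
  · simp

private lemma extract_eq (n : ℕ) (e f : Fin (n+1) → R)
    (h : (∑ l : Fin (n+1), MvPolynomial.C (e l) * X 0 ^ (n - (l:ℕ)) * X 1 ^ (l:ℕ)
            : MvPolynomial (Fin 2) R)
       = (∑ l : Fin (n+1), MvPolynomial.C (f l) * X 0 ^ (n - (l:ℕ)) * X 1 ^ (l:ℕ))) :
    e = f := by
  funext i
  have h2 := congrArg (MvPolynomial.coeff
    (Finsupp.single (0 : Fin 2) (n - (i:ℕ)) + Finsupp.single (1 : Fin 2) (i:ℕ))) h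
  rwa [coeff_extract, coeff_extract] at h2

private lemma bidiag_split (k : ℕ) (x y : R) (i : Fin (k+2)) (l : Fin (k+1)) :
    bidiag (k+2) (k+1) x y i l
    = (if i = Fin.castSucc l then y else 0) + (if i = Fin.succ l then -x else 0) := by
  simp only [bidiag, Matrix.of_apply, Fin.ext_iff, Fin.coe_castSucc, Fin.val_succ]
  split_ifs <;> simp_all

private lemma bidiag_col (k : ℕ) (u v s : R) (l : Fin (k+1)) :
    (∑ i : Fin (k+2), MvPolynomial.C (bidiag (k+2) (k+1) u v i l * s)
        * X 0 ^ (k+1-(i:ℕ)) * X 1 ^ (i:ℕ) : MvPolynomial (Fin 2) R)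
      = (MvPolynomial.C v * X 0 - MvPolynomial.C u * X 1)
        * (MvPolynomial.C s * X 0 ^ (k-(l:ℕ)) * X 1 ^ (l:ℕ)) := by
  have hl : (l:ℕ) ≤ k := Nat.lt_succ_iff.mp l.isLt
  have e1 : k + 1 - (l:ℕ) = (k - (l:ℕ)) + 1 := by omega
  have step : ∀ i : Fin (k+2), (MvPolynomial.C (bidiag (k+2) (k+1) u v i l * s)
        * X 0 ^ (k+1-(i:ℕ)) * X 1 ^ (i:ℕ) : MvPolynomial (Fin 2) R)
      = (if i = Fin.castSucc l then
          MvPolynomial.C (v * s) * X 0 ^ (k+1-(i:ℕ)) * X 1 ^ (i:ℕ) else 0)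
      + (if i = Fin.succ l then
          MvPolynomial.C (-u * s) * X 0 ^ (k+1-(i:ℕ)) * X 1 ^ (i:ℕ) else 0) := by
    intro i
    rw [bidiag_split]
    split_ifs with h1 h2 h2 <;> simp_all [Fin.ext_iff]
  rw [Finset.sum_congr rfl fun i _ => step i, Finset.sum_add_distrib,
    Finset.sum_ite_eq', Finset.sum_ite_eq']
  simp only [Finset.mem_univ, if_true, Fin.coe_castSucc, Fin.val_succ, e1,
    show k + 1 - ((l:ℕ) + 1) = k - (l:ℕ) from by omega]
  rw [map_mul, map_mul, map_neg]
  ring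

end Aux

open MvPolynomial in
/-- with `[x y] = [u v]·Q` for `Q ∈ GL₂(R)`, (1) applying `Sym^(r-1)(Q)` to a
coefficient column converts an expression in `x^(r-1), …, y^(r-1)` to one in
`u^(r-1), …, v^(r-1)`; (2) `Sym^(r-1)(Q) · B_{x,y} = det(Q) · B_{u,v} · Sym^(r-2)(Q)`.
(Here `r = k + 2`.) -/

theorem statement2 (R : Type*) [CommRing R] [IsLocalRing R]
    (hreg : IsTwoDimRegularLocal R)
    (Q : Matrix (Fin 2) (Fin 2) R) (hQ : IsUnit Q.det)
    (u v x y : R)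
    (hm1 : maximalIdeal R = Ideal.span {u, v})
    (hm2 : maximalIdeal R = Ideal.span {x, y})
    (hx : x = Q 0 0 * u + Q 1 0 * v)
    (hy : y = Q 0 1 * u + Q 1 1 * v)
    (k : ℕ)
    (S₁ : Matrix (Fin (k + 2)) (Fin (k + 2)) R)
    (S₂ : Matrix (Fin (k + 1)) (Fin (k + 1)) R)
    (hS₁ : IsSymOf (k + 1) (Q 0 0) (Q 1 0) (Q 0 1) (Q 1 1) S₁)
    (hS₂ : IsSymOf k (Q 0 0) (Q 1 0) (Q 0 1) (Q 1 1) S₂) :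
    (∀ (c : Fin (k + 2) → R) (a : R),
      Expresses (k + 2) x y c a → Expresses (k + 2) u v (S₁.mulVec c) a) ∧
    S₁ * bidiag (k + 2) (k + 1) x y = Q.det • (bidiag (k + 2) (k + 1) u v * S₂) := by
  classical
  constructor
  · -- Part 1
    intro c a h
    have key : ∀ j : Fin (k+2), x ^ (k + 1 - (j:ℕ)) * y ^ (j:ℕ)
        = ∑ i : Fin (k+2), S₁ i j * u ^ (k + 1 - (i:ℕ)) * v ^ (i:ℕ) := by
      intro j
      have h2 := congrArg (MvPolynomial.eval ![u, v]) (hS₁ j)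
      simp only [map_mul, map_pow, map_add, map_sum, MvPolynomial.eval_C, MvPolynomial.eval_X,
        Matrix.cons_val_zero, Matrix.cons_val_one, Matrix.head_cons] at h2
      rw [← hx, ← hy] at h2
      exact h2
    simp only [Expresses, show k + 2 - 1 = k + 1 from rfl] at h ⊢
    calc a = ∑ p : Fin (k+2), ∑ i : Fin (k+2),
            c p * (S₁ i p * u ^ (k + 1 - (i:ℕ)) * v ^ (i:ℕ)) := by
          rw [h]
          refine Finset.sum_congr rfl fun p _ => ?_
          rw [mul_assoc, key p, Finset.mul_sum]
      _ = ∑ i : Fin (k+2), S₁.mulVec c i * u ^ (k + 1 - (i:ℕ)) * v ^ (i:ℕ) := by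
          rw [Finset.sum_comm]
          refine Finset.sum_congr rfl fun i _ => ?_
          simp only [Matrix.mulVec, dotProduct]
          rw [Finset.sum_mul, Finset.sum_mul]
          exact Finset.sum_congr rfl fun p _ => by ring
  · -- Part 2
    ext i j
    have hl : (j:ℕ) ≤ k := Nat.lt_succ_iff.mp j.isLt
    have e1 : k + 1 - (j:ℕ) = (k - (j:ℕ)) + 1 := by omega
    have e2 : k + 1 - ((j:ℕ) + 1) = k - (j:ℕ) := by omega
    have h1 := hS₁ (Fin.castSucc j)
    have h2 := hS₁ (Fin.succ j)
    have h3 := hS₂ j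
    rw [Fin.coe_castSucc] at h1
    rw [Fin.val_succ] at h2
    have core : (MvPolynomial.C y *
          ((MvPolynomial.C (Q 0 0) * X 0 + MvPolynomial.C (Q 1 0) * X 1) ^ (k + 1 - (j:ℕ)) *
            (MvPolynomial.C (Q 0 1) * X 0 + MvPolynomial.C (Q 1 1) * X 1) ^ (j:ℕ))
        - MvPolynomial.C x *
          ((MvPolynomial.C (Q 0 0) * X 0 + MvPolynomial.C (Q 1 0) * X 1) ^ (k + 1 - ((j:ℕ) + 1)) *
            (MvPolynomial.C (Q 0 1) * X 0 + MvPolynomial.C (Q 1 1) * X 1) ^ ((j:ℕ) + 1))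
        : MvPolynomial (Fin 2) R)
        = MvPolynomial.C Q.det * ((MvPolynomial.C v * X 0 - MvPolynomial.C u * X 1)
            * ((MvPolynomial.C (Q 0 0) * X 0 + MvPolynomial.C (Q 1 0) * X 1) ^ (k - (j:ℕ)) *
              (MvPolynomial.C (Q 0 1) * X 0 + MvPolynomial.C (Q 1 1) * X 1) ^ (j:ℕ))) := by
      rw [e1, e2, hx, hy, Matrix.det_fin_two]
      simp only [map_add, map_mul, map_sub, pow_succ]
      ring
    rw [h1, h2, h3] at core
    have lhs_eq : (MvPolynomial.C y * (∑ i : Fin (k+2),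
            MvPolynomial.C (S₁ i (Fin.castSucc j)) * X 0 ^ (k + 1 - (i:ℕ)) * X 1 ^ (i:ℕ))
        - MvPolynomial.C x * (∑ i : Fin (k+2),
            MvPolynomial.C (S₁ i (Fin.succ j)) * X 0 ^ (k + 1 - (i:ℕ)) * X 1 ^ (i:ℕ))
          : MvPolynomial (Fin 2) R)
        = ∑ i : Fin (k+2), MvPolynomial.C
            (y * S₁ i (Fin.castSucc j) - x * S₁ i (Fin.succ j))
            * X 0 ^ (k + 1 - (i:ℕ)) * X 1 ^ (i:ℕ) := by
      rw [Finset.mul_sum, Finset.mul_sum, ← Finset.sum_sub_distrib]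
      refine Finset.sum_congr rfl fun i _ => ?_
      rw [map_sub, map_mul, map_mul]
      ring
    have rhs_eq : (MvPolynomial.C Q.det * ((MvPolynomial.C v * X 0 - MvPolynomial.C u * X 1)
          * ∑ l : Fin (k+1), MvPolynomial.C (S₂ l j) * X 0 ^ (k - (l:ℕ)) * X 1 ^ (l:ℕ))
          : MvPolynomial (Fin 2) R)
        = ∑ i : Fin (k+2), MvPolynomial.C
            (Q.det * (bidiag (k+2) (k+1) u v * S₂) i j)
            * X 0 ^ (k + 1 - (i:ℕ)) * X 1 ^ (i:ℕ) := by
      calc (MvPolynomial.C Q.det * ((MvPolynomial.C v * X 0 - MvPolynomial.C u * X 1)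
          * ∑ l : Fin (k+1), MvPolynomial.C (S₂ l j) * X 0 ^ (k - (l:ℕ)) * X 1 ^ (l:ℕ))
          : MvPolynomial (Fin 2) R)
          = MvPolynomial.C Q.det * ∑ l : Fin (k+1), ∑ i : Fin (k+2),
              MvPolynomial.C (bidiag (k+2) (k+1) u v i l * S₂ l j)
              * X 0 ^ (k + 1 - (i:ℕ)) * X 1 ^ (i:ℕ) := by
            congr 1
            rw [Finset.mul_sum]
            exact Finset.sum_congr rfl fun l _ => (bidiag_col k u v (S₂ l j) l).symm
        _ = ∑ i : Fin (k+2), MvPolynomial.C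
              (Q.det * (bidiag (k+2) (k+1) u v * S₂) i j)
              * X 0 ^ (k + 1 - (i:ℕ)) * X 1 ^ (i:ℕ) := by
            rw [Finset.sum_comm, Finset.mul_sum]
            refine Finset.sum_congr rfl fun i _ => ?_
            conv_rhs => rw [Matrix.mul_apply, map_mul, map_sum, Finset.mul_sum,
              Finset.sum_mul, Finset.sum_mul]
            rw [Finset.mul_sum]
            exact Finset.sum_congr rfl fun l _ => by ring
    have entries := extract_eq (k+1)
      (fun i => y * S₁ i (Fin.castSucc j) - x * S₁ i (Fin.succ j))
      (fun i => Q.det * (bidiag (k+2) (k+1) u v * S₂) i j)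
      (lhs_eq ▸ rhs_eq ▸ core)
    have entry := congrFun entries i
    rw [Matrix.smul_apply, smul_eq_mul, ← entry, Matrix.mul_apply]
    have st : ∀ l : Fin (k+2), S₁ i l * bidiag (k+2) (k+1) x y l j
        = (if l = Fin.castSucc j then S₁ i l * y else 0)
          + (if l = Fin.succ j then S₁ i l * (-x) else 0) := by
      intro l
      rw [bidiag_split, mul_add]
      simp only [mul_ite, mul_zero]
    rw [Finset.sum_congr rfl fun l _ => st l, Finset.sum_add_distrib,
      Finset.sum_ite_eq', Finset.sum_ite_eq']
    simp only [Finset.mem_univ, if_true]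
    ring
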